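/- Let p be an odd prime with p + 2 also prime, and let c = p(p+2) - 4·(2^{p(p+2)} - 1)/(2^{p+2} - 1) + 1. Then gcd(c, (2^{p(p+2)} - 1)/((2^p - 1)(2^{p+2} - 1))) = 1. -/

import Mathlib

open Polynomial

lemma two_pow_dvd_iff {r : ℕ} (hr : r.Prime) (k : ℕ) :
    (r : ℤ) ∣ 2 ^ k - 1 ↔ orderOf (2 : ZMod r) ∣ k := by
  haveI := Fact.mk hr
  rw [orderOf_dvd_iff_pow_eq_one, ← ZMod.intCast_zmod_eq_zero_iff_dvd]
  push_cast
  rw [sub_eq_zero]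

theorem stmt_10 (p : ℕ) (hp : p.Prime) (hodd : Odd p) (hp2 : (p + 2).Prime)
    (c : ℤ) (hc : c = p * (p + 2) - 4 * ((2 ^ (p * (p + 2)) - 1) / (2 ^ (p + 2) - 1)) + 1) :
    Int.gcd c ((2 ^ (p * (p + 2)) - 1) / ((2 ^ p - 1) * (2 ^ (p + 2) - 1))) = 1 := by
  subst hc
  set q : ℕ := p + 2 with hq
  have hp3 : 3 ≤ p := by
    have h2 := hp.two_le
    rcases Nat.lt_or_ge p 3 with h | h
    · have hp2' : p = 2 := by omega
      rw [hp2', Nat.odd_iff] at hodd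
      omega
    · exact h
  have hq5 : 5 ≤ q := by omega
  set n : ℕ := p * q with hn
  have hpq : p ≠ q := by omega
  have hnpos : 0 < n := by positivity
  set A : ℤ := 2 ^ p - 1 with hA
  set B : ℤ := 2 ^ q - 1 with hB
  set M : ℤ := 2 ^ n - 1 with hM
  set Φ : ℤ := (cyclotomic n ℤ).eval 2 with hΦ
  -- divisors of n
  have hdiv : Nat.divisors n = {1, p, q, n} := by
    ext x
    simp only [Nat.mem_divisors, Finset.mem_insert, Finset.mem_singleton]
    constructor
    · rintro ⟨hx, -⟩
      rw [hn] at hx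
      rcases Nat.dvd_mul.mp hx with ⟨a, b, ha, hb, rfl⟩
      rcases (Nat.Prime.eq_one_or_self_of_dvd hp a ha) with rfl | rfl <;>
        rcases (Nat.Prime.eq_one_or_self_of_dvd hp2 b hb) with rfl | rfl <;>
        simp [hn]
    · rintro (rfl | rfl | rfl | rfl) <;>
        exact ⟨by first | exact dvd_rfl | exact one_dvd _ | exact Dvd.intro q rfl |
          exact Dvd.intro_left p rfl, hnpos.ne'⟩
  -- evaluate cyclotomics
  have e1 : (cyclotomic 1 ℤ).eval 2 = 1 := by simp [cyclotomic_one]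
  have ep : (cyclotomic p ℤ).eval 2 = A := by
    have h := congrArg (eval 2) (prod_cyclotomic_eq_X_pow_sub_one hp.pos ℤ)
    rw [hp.divisors] at h
    rw [Finset.prod_insert (by simp; omega)] at h
    simp only [Finset.prod_singleton, eval_mul, eval_sub, eval_pow, eval_X, eval_one, e1,
      one_mul] at h
    rw [h, hA]
  have eq' : (cyclotomic q ℤ).eval 2 = B := by
    have h := congrArg (eval 2) (prod_cyclotomic_eq_X_pow_sub_one hp2.pos ℤ)
    rw [hp2.divisors] at h
    rw [Finset.prod_insert (by simp; omega)] at h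
    simp only [Finset.prod_singleton, eval_mul, eval_sub, eval_pow, eval_X, eval_one, e1,
      one_mul] at h
    rw [h, hB]
  have hltp : p < p * q := by nlinarith
  have hltq : q < p * q := by nlinarith
  have h15 : 15 ≤ p * q := by nlinarith
  have key : M = A * B * Φ := by
    have h := congrArg (eval 2) (prod_cyclotomic_eq_X_pow_sub_one hnpos ℤ)
    rw [hdiv] at h
    rw [Finset.prod_insert (by simp; omega), Finset.prod_insert (by simp; omega),
      Finset.prod_insert (by simp; omega), Finset.prod_singleton] at h
    simp only [eval_mul, eval_sub, eval_pow, eval_X, eval_one, e1, one_mul, ep, eq'] at h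
    rw [← hM, ← hΦ] at h
    rw [← h]; ring
  have hApos : 0 < A := by
    have h : (1:ℤ) < 2 ^ p := by exact_mod_cast Nat.one_lt_two_pow_iff.mpr (by omega)
    rw [hA]; linarith
  have hBpos : 0 < B := by
    have h : (1:ℤ) < 2 ^ q := by exact_mod_cast Nat.one_lt_two_pow_iff.mpr (by omega)
    rw [hB]; linarith
  have hMpos : 0 < M := by
    have h : (1:ℤ) < 2 ^ n := by exact_mod_cast Nat.one_lt_two_pow_iff.mpr (by omega)
    rw [hM]; linarith
  have hQ : M / (A * B) = Φ := by
    rw [key, Int.mul_ediv_cancel_left _ (by positivity)]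
  have hMB : M / B = A * Φ := by
    have : M = B * (A * Φ) := by rw [key]; ring
    rw [this, Int.mul_ediv_cancel_left _ hBpos.ne']
  rw [hQ, hMB]
  -- now the main goal : gcd (p*q - 4*(A*Φ) + 1) Φ = 1
  by_contra hcon
  have hΦne : Φ ≠ 0 := by
    intro h0; rw [h0, mul_zero] at key; omega
  set c : ℤ := (p : ℤ) * (p + 2) - 4 * (A * Φ) + 1 with hcdef
  obtain ⟨r, hr, hrdvd⟩ := Nat.exists_prime_and_dvd hcon
  haveI := Fact.mk hr
  have hrg : (r : ℤ) ∣ Int.gcd c Φ := Int.natCast_dvd_natCast.mpr hrdvd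
  have hrc : (r : ℤ) ∣ c := hrg.trans (Int.gcd_dvd_left _ _)
  have hrΦ : (r : ℤ) ∣ Φ := hrg.trans (Int.gcd_dvd_right _ _)
  have hrM : (r : ℤ) ∣ M := by rw [key]; exact Dvd.dvd.mul_left hrΦ _
  have hordn : orderOf (2 : ZMod r) ∣ n := (two_pow_dvd_iff hr n).mp hrM
  -- r is odd
  have hr2 : r ≠ 2 := by
    rintro rfl
    have : (2:ℤ) ∣ 2 ^ n := dvd_pow_self 2 hnpos.ne'
    have h1 : (2:ℤ) ∣ 1 := by
      have hd := dvd_sub this hrM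
      rw [hM] at hd
      simpa using hd
    norm_num at h1
  -- helper to kill orderOf = 1 cases
  have ord_ne_one : ∀ s : ℕ, s.Prime → ¬ orderOf (2 : ZMod s) ∣ 1 := by
    intro s hs h
    have h1 : (s : ℤ) ∣ 2 ^ 1 - 1 := (two_pow_dvd_iff hs 1).mpr h
    have h2 : (s : ℤ) ∣ 1 := by norm_num at h1; exact h1
    have h3 : s ∣ 1 := by exact_mod_cast h2
    exact hs.ne_one (Nat.dvd_one.mp h3)
  -- r ≠ p
  have hrp : r ≠ p := by
    rintro rfl
    have h2ne : (2 : ZMod r) ≠ 0 := by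
      intro h0
      have : (r : ℤ) ∣ 2 := by
        have : ((2:ℤ) : ZMod r) = 0 := by push_cast; exact h0
        exact (ZMod.intCast_zmod_eq_zero_iff_dvd _ _).mp this
      have : r ∣ 2 := Int.ofNat_dvd.mp (by exact_mod_cast this)
      have h2le := Nat.le_of_dvd (by norm_num) this
      have := hr.two_le
      omega
    have hf : orderOf (2 : ZMod r) ∣ r - 1 := ZMod.orderOf_dvd_card_sub_one h2ne
    have hle : orderOf (2 : ZMod r) ≤ r - 1 := Nat.le_of_dvd (by omega) hf
    have hcop : (Nat.Coprime r (orderOf (2 : ZMod r))) :=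
      (Nat.Prime.coprime_iff_not_dvd hp).mpr (fun h => by
        have hne : orderOf (2 : ZMod r) ≠ 0 := by
          intro h0
          rw [h0] at hf
          have := Nat.eq_zero_of_zero_dvd hf
          omega
        have := Nat.le_of_dvd (Nat.pos_of_ne_zero hne) h
        omega)
    have hdq : orderOf (2 : ZMod r) ∣ q := by
      have := hordn
      rw [hn] at this
      exact (Nat.Coprime.dvd_of_dvd_mul_left hcop.symm this)
    rcases (Nat.Prime.eq_one_or_self_of_dvd hp2 _ hdq) with h1 | hq'
    · exact ord_ne_one r hp (by simp [h1])
    · rw [hq'] at hf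
      have := Nat.le_of_dvd (by omega) hf
      omega
  -- r ≠ q
  have hrq : r ≠ q := by
    rintro rfl
    have h2ne : (2 : ZMod q) ≠ 0 := by
      intro h0
      have : (q : ℤ) ∣ 2 := by
        have : ((2:ℤ) : ZMod q) = 0 := by push_cast; exact h0
        exact (ZMod.intCast_zmod_eq_zero_iff_dvd _ _).mp this
      have : q ∣ 2 := Int.ofNat_dvd.mp (by exact_mod_cast this)
      have h2le := Nat.le_of_dvd (by norm_num) this
      have := hr.two_le
      omega
    have hf : orderOf (2 : ZMod q) ∣ q - 1 := ZMod.orderOf_dvd_card_sub_one h2ne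
    have hle : orderOf (2 : ZMod q) ≤ q - 1 := Nat.le_of_dvd (by omega) hf
    have hcop : (Nat.Coprime q (orderOf (2 : ZMod q))) :=
      (Nat.Prime.coprime_iff_not_dvd hp2).mpr (fun h => by
        have hne : orderOf (2 : ZMod q) ≠ 0 := by
          intro h0
          rw [h0] at hf
          have := Nat.eq_zero_of_zero_dvd hf
          omega
        have := Nat.le_of_dvd (Nat.pos_of_ne_zero hne) h
        omega)
    have hdp : orderOf (2 : ZMod q) ∣ p := by
      have := hordn
      rw [hn, mul_comm] at this
      exact (Nat.Coprime.dvd_of_dvd_mul_left hcop.symm this)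
    rcases (Nat.Prime.eq_one_or_self_of_dvd hp _ hdp) with h1 | hp'
    · exact ord_ne_one q hp2 (by simp [h1])
    · rw [hp'] at hf
      have hq1 : q - 1 = p + 1 := by omega
      rw [hq1] at hf
      have h1 : p ∣ 1 := by simpa using Nat.dvd_sub hf (dvd_refl p)
      have := Nat.dvd_one.mp h1
      omega
  -- r does not divide n
  have hrn : ¬ (r ∣ n) := by
    intro h
    rw [hn] at h
    rcases (Nat.Prime.dvd_mul hr).mp h with h' | h'
    · exact hrp ((Nat.prime_dvd_prime_iff_eq hr hp).mp h')
    · exact hrq ((Nat.prime_dvd_prime_iff_eq hr hp2).mp h')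
  haveI : NeZero ((n : ℕ) : ZMod r) := NeZero.of_not_dvd (ZMod r) hrn
  -- 2 is a root of cyclotomic n over ZMod r
  have hroot : IsRoot (cyclotomic n (ZMod r)) 2 := by
    have hcast : ((Φ : ℤ) : ZMod r) = 0 := (ZMod.intCast_zmod_eq_zero_iff_dvd _ _).mpr hrΦ
    rw [IsRoot.def, ← map_cyclotomic_int n (ZMod r), eval_map]
    have h2 : (2 : ZMod r) = (Int.castRingHom (ZMod r)) (2 : ℤ) := by simp
    rw [h2, eval₂_hom]
    exact hcast
  have hprim : IsPrimitiveRoot (2 : ZMod r) n := isRoot_cyclotomic_iff.mp hroot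
  have hord : orderOf (2 : ZMod r) = n := hprim.eq_orderOf.symm
  have h2ne : (2 : ZMod r) ≠ 0 := by
    intro h0
    have : (r : ℤ) ∣ 2 := by
      have : ((2:ℤ) : ZMod r) = 0 := by push_cast; exact h0
      exact (ZMod.intCast_zmod_eq_zero_iff_dvd _ _).mp this
    have : r ∣ 2 := Int.ofNat_dvd.mp (by exact_mod_cast this)
    have h2le := Nat.le_of_dvd (by norm_num) this
    have := hr.two_le
    omega
  have hfermat : n ∣ r - 1 := by
    rw [← hord]; exact ZMod.orderOf_dvd_card_sub_one h2ne
  have hrge : n + 1 ≤ r := by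
    have h2r := hr.two_le
    have := Nat.le_of_dvd (by omega) hfermat
    omega
  -- r divides n + 1
  have hrn1 : (r : ℤ) ∣ (n : ℤ) + 1 := by
    have h4 : (r : ℤ) ∣ 4 * (A * Φ) := by
      rw [← mul_assoc]; exact hrΦ.mul_left (4 * A)
    have := dvd_add hrc h4
    have heq : c + 4 * (A * Φ) = (n : ℤ) + 1 := by
      rw [hcdef, hn, hq]; push_cast; ring
    rwa [heq] at this
  have hrn1' : r ∣ n + 1 := by
    have : (r : ℤ) ∣ ((n + 1 : ℕ) : ℤ) := by push_cast; exact hrn1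
    exact_mod_cast this
  have := Nat.le_of_dvd (by omega) hrn1'
  have hreq : r = n + 1 := by omega
  -- but n + 1 is even and r is an odd prime
  have : Even (n + 1) := by
    have : Odd n := by
      rw [hn, hq]
      exact hodd.mul (by rcases hodd with ⟨k, hk⟩; exact ⟨k + 1, by omega⟩)
    rcases this with ⟨k, hk⟩
    exact ⟨k + 1, by omega⟩
  rw [← hreq] at this
  rcases hr.eq_two_or_odd' with h | h
  · omega
  · rcases h with ⟨k, hk⟩; rcases this with ⟨m, hm⟩; omega
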